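/- arXiv:1611.08825 — 6 statements merged into one kernel-verified Lean document; each statement's English description precedes it below -/
import Mathlib

section
/- Let A : Fin N → Matrix (Fin 2) (Fin 2) ℝ be a finite family of real 2×2 matrices. Then there exists an invertible matrix T ∈ Matrix (Fin 2) (Fin 2) ℝ such that (T * A i * T⁻¹) 1 0 = 0 for every i : Fin N (i.e. all the matrices are simultaneously upper triangularizable) if and only if the matrices have a common eigenvector, i.e. there exists v ∈ (Fin 2 → ℝ) with v ≠ 0 such that for every i : Fin N there exists μ ∈ ℝ with (A i).mulVec v = μ • v. -/
open Matrix

private lemma mulVec_e0 (M : Matrix (Fin 2) (Fin 2) ℝ) :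
    M.mulVec (Pi.single 0 1) = fun j => M j 0 := by
  funext j
  simp [Matrix.mulVec, dotProduct, Fin.sum_univ_two, Pi.single_apply]

theorem two_by_two_simultaneous_triangularization_iff_common_eigenvector
    (N : ℕ) (A : Fin N → Matrix (Fin 2) (Fin 2) ℝ) :
    (∃ T : Matrix (Fin 2) (Fin 2) ℝ, IsUnit T ∧
      ∀ i : Fin N, (T * A i * T⁻¹) 1 0 = 0) ↔
    (∃ v : Fin 2 → ℝ, v ≠ 0 ∧
      ∀ i : Fin N, ∃ μ : ℝ, (A i).mulVec v = μ • v) := by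
  constructor
  · rintro ⟨T, hT, htri⟩
    have hTd : IsUnit T.det := (Matrix.isUnit_iff_isUnit_det T).mp hT
    have hTT : T * T⁻¹ = 1 := Matrix.mul_nonsing_inv T hTd
    have hTT' : T⁻¹ * T = 1 := Matrix.nonsing_inv_mul T hTd
    refine ⟨T⁻¹.mulVec (Pi.single 0 1), ?_, ?_⟩
    · intro h
      have : T.mulVec (T⁻¹.mulVec (Pi.single 0 1)) = (0 : Fin 2 → ℝ) := by
        rw [h]; simp [Matrix.mulVec_zero]
      rw [Matrix.mulVec_mulVec, hTT, Matrix.one_mulVec] at this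
      have := congrFun this 0
      simp [Pi.single_apply] at this
    · intro i
      set M := T * A i * T⁻¹ with hM
      refine ⟨M 0 0, ?_⟩
      have hMe : M.mulVec (Pi.single 0 1) = (M 0 0) • (Pi.single 0 1 : Fin 2 → ℝ) := by
        rw [mulVec_e0]
        funext j
        fin_cases j
        · simp [Pi.single_apply]
        · simpa [Pi.single_apply] using htri i
      have key : A i * T⁻¹ = T⁻¹ * M := by
        rw [hM, ← Matrix.mul_assoc, ← Matrix.mul_assoc, hTT', Matrix.one_mul]
      calc (A i).mulVec (T⁻¹.mulVec (Pi.single 0 1))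
          = (A i * T⁻¹).mulVec (Pi.single 0 1) := Matrix.mulVec_mulVec _ _ _
        _ = (T⁻¹ * M).mulVec (Pi.single 0 1) := by rw [key]
        _ = T⁻¹.mulVec (M.mulVec (Pi.single 0 1)) := (Matrix.mulVec_mulVec _ _ _).symm
        _ = T⁻¹.mulVec ((M 0 0) • (Pi.single 0 1 : Fin 2 → ℝ)) := by rw [hMe]
        _ = (M 0 0) • T⁻¹.mulVec (Pi.single 0 1) := Matrix.mulVec_smul _ _ _
  · rintro ⟨v, hv, hev⟩
    -- build S with first column v, invertible
    have hv' : v 0 ≠ 0 ∨ v 1 ≠ 0 := by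
      by_contra h
      push_neg at h
      apply hv
      funext j; fin_cases j <;> simp [h.1, h.2]
    obtain ⟨w, hdet⟩ : ∃ w : Fin 2 → ℝ, v 0 * w 1 - v 1 * w 0 ≠ 0 := by
      rcases hv' with h | h
      · exact ⟨![0, 1], by simpa using h⟩
      · exact ⟨![1, 0], by simpa using h⟩
    set S : Matrix (Fin 2) (Fin 2) ℝ := !![v 0, w 0; v 1, w 1] with hS
    have hSdet : S.det ≠ 0 := by
      rw [hS, Matrix.det_fin_two_of]
      simpa [mul_comm] using hdet
    have hSd : IsUnit S.det := isUnit_iff_ne_zero.mpr hSdet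
    have hSu : IsUnit S := (Matrix.isUnit_iff_isUnit_det S).mpr hSd
    have hSS : S⁻¹ * S = 1 := Matrix.nonsing_inv_mul S hSd
    have hSe : S.mulVec (Pi.single 0 1) = v := by
      rw [mulVec_e0]; funext j; fin_cases j <;> simp [hS]
    have hSS' : S * S⁻¹ = 1 := Matrix.mul_nonsing_inv S hSd
    refine ⟨S⁻¹, Matrix.isUnit_nonsing_inv_iff.mpr hSu, ?_⟩
    · intro i
      obtain ⟨μ, hμ⟩ := hev i
      have hSinv : (S⁻¹)⁻¹ = S := Matrix.nonsing_inv_nonsing_inv S hSd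
      have : ((S⁻¹ * A i * (S⁻¹)⁻¹).mulVec (Pi.single 0 1)) = μ • (Pi.single 0 1 : Fin 2 → ℝ) := by
        rw [hSinv]
        calc (S⁻¹ * A i * S).mulVec (Pi.single 0 1)
            = (S⁻¹ * A i).mulVec (S.mulVec (Pi.single 0 1)) := (Matrix.mulVec_mulVec _ _ _).symm
          _ = (S⁻¹ * A i).mulVec v := by rw [hSe]
          _ = S⁻¹.mulVec ((A i).mulVec v) := (Matrix.mulVec_mulVec _ _ _).symm
          _ = S⁻¹.mulVec (μ • v) := by rw [hμ]
          _ = μ • S⁻¹.mulVec v := Matrix.mulVec_smul _ _ _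
          _ = μ • S⁻¹.mulVec (S.mulVec (Pi.single 0 1)) := by rw [hSe]
          _ = μ • (S⁻¹ * S).mulVec (Pi.single 0 1) := by rw [Matrix.mulVec_mulVec]
          _ = μ • (Pi.single 0 1 : Fin 2 → ℝ) := by rw [hSS, Matrix.one_mulVec]
      have h1 := congrFun this 1
      rw [mulVec_e0] at h1
      simpa [Pi.single_apply] using h1
end

section
/- Let n ≥ 1, let A : Fin N → Matrix (Fin n) (Fin n) ℝ be a finite family of real n×n matrices, and let 1 ≤ r < n. Then the family is simultaneously block triangularizable with dimension r if and only if there exists a matrix J ∈ Matrix (Fin n) (Fin r) ℝ of full column rank (J.rank = r) such that for every i : Fin N the n×2r matrix [J (A i) * J], formed by placing the columns of J followed by the columns of (A i) * J (Matrix.fromColumns J ((A i) * J)), has rank r. -/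
open Matrix

section Aux

variable {n r : ℕ}

/-- Range of mulVecLin of fromColumns is the sup of the ranges. -/
lemma range_fromColumns_mulVecLin {m r₁ r₂ : ℕ} (J : Matrix (Fin m) (Fin r₁) ℝ)
    (K : Matrix (Fin m) (Fin r₂) ℝ) :
    LinearMap.range (Matrix.fromCols J K).mulVecLin =
      LinearMap.range J.mulVecLin ⊔ LinearMap.range K.mulVecLin := by
  apply le_antisymm
  · rintro _ ⟨w, rfl⟩
    have : (Matrix.fromCols J K).mulVecLin w =
        J *ᵥ (w ∘ Sum.inl) + K *ᵥ (w ∘ Sum.inr) := by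
      rw [Matrix.mulVecLin_apply, ← Matrix.fromCols_mulVec_sumElim,
        Sum.elim_comp_inl_inr]
    rw [this]
    exact Submodule.add_mem _
      (Submodule.mem_sup_left ⟨w ∘ Sum.inl, rfl⟩)
      (Submodule.mem_sup_right ⟨w ∘ Sum.inr, rfl⟩)
  · apply sup_le
    · rintro _ ⟨v, rfl⟩
      refine ⟨Sum.elim v 0, ?_⟩
      simp [Matrix.fromCols_mulVec_sumElim]
    · rintro _ ⟨v, rfl⟩
      refine ⟨Sum.elim 0 v, ?_⟩
      simp [Matrix.fromCols_mulVec_sumElim]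

end Aux


lemma exists_adapted_basis {n r s : ℕ} (e : Fin r ⊕ Fin s ≃ Fin n)
    (V W : Submodule ℝ (Fin n → ℝ)) (hW : IsCompl V W)
    (bV : Module.Basis (Fin r) ℝ V) (bW : Module.Basis (Fin s) ℝ W) :
    ∃ bN : Module.Basis (Fin n) ℝ (Fin n → ℝ),
      (∀ q k, bN (e (Sum.inl q)) k = (bV q : Fin n → ℝ) k) ∧
      (∀ u ∈ V, ∀ p, bN.repr u (e (Sum.inr p)) = 0) := by
  refine ⟨((bV.prod bW).map (Submodule.prodEquivOfIsCompl V W hW)).reindex e, ?_, ?_⟩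
  · intro q k
    rw [Module.Basis.reindex_apply, Equiv.symm_apply_apply, Module.Basis.map_apply, Module.Basis.prod_apply]
    simp
  · intro u hu p
    rw [Module.Basis.repr_reindex_apply, Equiv.symm_apply_apply]
    have h2 : ((bV.prod bW).map (Submodule.prodEquivOfIsCompl V W hW)).repr u (Sum.inr p) =
        (bV.prod bW).repr ((Submodule.prodEquivOfIsCompl V W hW).symm u) (Sum.inr p) := rfl
    have h3 : (V.prodEquivOfIsCompl W hW).symm u = ((⟨u, hu⟩ : V), (0 : W)) :=
      Submodule.prodEquivOfIsCompl_symm_apply_left (p := V) (q := W) hW ⟨u, hu⟩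
    rw [h2, h3, Module.Basis.prod_repr_inr]
    simp

theorem simultaneous_block_triangularization_iff_rank_condition
    (n r N : ℕ) (hn : 1 ≤ n) (hr : 1 ≤ r) (hrn : r < n)
    (A : Fin N → Matrix (Fin n) (Fin n) ℝ) :
    (∃ T : Matrix (Fin n) (Fin n) ℝ, IsUnit T ∧
      ∀ (i : Fin N) (p : Fin (n - r)) (q : Fin r),
        (T * A i * T⁻¹)
          (Fin.cast (show r + (n - r) = n by omega) (finSumFinEquiv (Sum.inr p)))
          (Fin.cast (show r + (n - r) = n by omega) (finSumFinEquiv (Sum.inl q))) = 0) ↔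
    (∃ J : Matrix (Fin n) (Fin r) ℝ, J.rank = r ∧
      ∀ i : Fin N, (Matrix.fromCols J ((A i) * J)).rank = r) := by
  have hadd : r + (n - r) = n := by omega
  set e : Fin r ⊕ Fin (n - r) ≃ Fin n := finSumFinEquiv.trans (finCongr hadd) with he_def
  have he : ∀ k, e k = Fin.cast hadd (finSumFinEquiv k) := fun _ => rfl
  constructor
  · -- forward direction
    rintro ⟨T, hT, hzero⟩
    have hTdet : IsUnit T.det := (Matrix.isUnit_iff_isUnit_det T).mp hT
    have hTinv : T⁻¹ * T = 1 := Matrix.nonsing_inv_mul T hTdet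
    have hTinv' : T * T⁻¹ = 1 := Matrix.mul_nonsing_inv T hTdet
    -- column-selection matrix
    set E : Matrix (Fin n) (Fin r) ℝ :=
      Matrix.of (fun x q => if x = e (Sum.inl q) then (1 : ℝ) else 0) with hE_def
    set F : Matrix (Fin r) (Fin n) ℝ :=
      Matrix.of (fun q x => if x = e (Sum.inl q) then (1 : ℝ) else 0) with hF_def
    have hFE : F * E = 1 := by
      ext q q'
      simp only [Matrix.mul_apply, hF_def, hE_def, Matrix.of_apply, ite_mul, one_mul, zero_mul]
      rw [Finset.sum_ite_eq' _ (e (Sum.inl q))]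
      simp only [Finset.mem_univ, if_true, Matrix.one_apply]
      by_cases h : q = q'
      · simp [h]
      · have : e (Sum.inl q') ≠ e (Sum.inl q) := by
          simp only [ne_eq, EmbeddingLike.apply_eq_iff_eq, Sum.inl.injEq]
          exact fun hc => h (hc.symm)
        simp [this, h, Ne.symm h]
    set J : Matrix (Fin n) (Fin r) ℝ := T⁻¹ * E with hJ_def
    have hFTJ : (F * T) * J = 1 := by
      rw [hJ_def, Matrix.mul_assoc, ← Matrix.mul_assoc T, hTinv', Matrix.one_mul, hFE]
    have hrankJ : J.rank = r := by
      apply le_antisymm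
      · exact Matrix.rank_le_width J
      · calc (r : ℕ) = (1 : Matrix (Fin r) (Fin r) ℝ).rank := by
              rw [Matrix.rank_one, Fintype.card_fin]
            _ = ((F * T) * J).rank := by rw [hFTJ]
            _ ≤ J.rank := Matrix.rank_mul_le_right _ _
    refine ⟨J, hrankJ, fun i => ?_⟩
    -- A i * J = J * C i
    set C : Matrix (Fin r) (Fin r) ℝ :=
      Matrix.of (fun q' q => (T * A i * T⁻¹) (e (Sum.inl q')) (e (Sum.inl q))) with hC_def
    have hBE : (T * A i * T⁻¹) * E = E * C := by
      ext x q
      obtain ⟨k, rfl⟩ := e.surjective x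
      have hlhs : ((T * A i * T⁻¹) * E) (e k) q = (T * A i * T⁻¹) (e k) (e (Sum.inl q)) := by
        simp only [Matrix.mul_apply, hE_def, Matrix.of_apply, mul_ite, mul_one, mul_zero]
        rw [Finset.sum_ite_eq' _ (e (Sum.inl q))]
        simp
      rw [hlhs]
      have hrhs : (E * C) (e k) q =
          ∑ q', (if e k = e (Sum.inl q') then (1:ℝ) else 0) *
            (T * A i * T⁻¹) (e (Sum.inl q')) (e (Sum.inl q)) := by
        simp [Matrix.mul_apply, hE_def, hC_def]
      rw [hrhs]
      cases k with
      | inl q₀ =>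
        rw [Finset.sum_eq_single q₀]
        · simp
        · intro q' _ hq'
          have : e (Sum.inl q₀) ≠ e (Sum.inl q') := by
            simp only [ne_eq, EmbeddingLike.apply_eq_iff_eq, Sum.inl.injEq]
            exact fun hc => hq' hc.symm
          simp [this]
        · simp
      | inr p =>
        rw [he, he] at *
        rw [hzero i p q]
        apply (Finset.sum_eq_zero ?_).symm
        intro q' _
        have : e (Sum.inr p) ≠ e (Sum.inl q') := by
          simp only [ne_eq, EmbeddingLike.apply_eq_iff_eq]
          exact fun hc => Sum.inr_ne_inl hc
        rw [← he, ← he]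
        simp [this]
    have hAJ : A i * J = J * C := by
      have h1 : A i * J = T⁻¹ * ((T * A i * T⁻¹) * E) := by
        rw [hJ_def]
        rw [show T * A i * T⁻¹ = T * (A i * T⁻¹) by rw [Matrix.mul_assoc]]
        rw [← Matrix.mul_assoc T⁻¹, ← Matrix.mul_assoc T⁻¹, hTinv, Matrix.one_mul,
          Matrix.mul_assoc]
      rw [h1, hBE, hJ_def, Matrix.mul_assoc]
    -- compute rank of fromColumns
    rw [hAJ]
    have hfc : Matrix.fromCols J (J * C) = J * Matrix.fromCols 1 C := by
      rw [Matrix.mul_fromCols, Matrix.mul_one]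
    apply le_antisymm
    · rw [hfc]
      calc (J * Matrix.fromCols 1 C).rank ≤ J.rank := Matrix.rank_mul_le_left _ _
        _ = r := hrankJ
    · have hJr : J = (Matrix.fromCols J (J * C)) *
          (Matrix.fromRows 1 0 : Matrix (Fin r ⊕ Fin r) (Fin r) ℝ) := by
        rw [hfc, Matrix.mul_assoc, Matrix.fromCols_mul_fromRows]
        simp
      calc (r : ℕ) = J.rank := hrankJ.symm
        _ = ((Matrix.fromCols J (J * C)) * (Matrix.fromRows 1 0 : Matrix (Fin r ⊕ Fin r) (Fin r) ℝ)).rank := by rw [← hJr]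
        _ ≤ (Matrix.fromCols J (J * C)).rank := Matrix.rank_mul_le_left _ _
  · -- backward direction
    rintro ⟨J, hJ, hranks⟩
    set V : Submodule ℝ (Fin n → ℝ) := LinearMap.range J.mulVecLin with hV_def
    have hVr : Module.finrank ℝ V = r := hJ
    -- invariance
    have hinv : ∀ i, ∀ u ∈ V, (A i) *ᵥ u ∈ V := by
      intro i u hu
      have hsup : LinearMap.range ((A i * J).mulVecLin) ≤ V := by
        have h1 : (Matrix.fromCols J (A i * J)).rank =
            Module.finrank ℝ (V ⊔ LinearMap.range ((A i * J).mulVecLin) :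
              Submodule ℝ (Fin n → ℝ)) := by
          rw [Matrix.rank, range_fromColumns_mulVecLin]
        have hle : V ≤ V ⊔ LinearMap.range ((A i * J).mulVecLin) := le_sup_left
        have heq : V = V ⊔ LinearMap.range ((A i * J).mulVecLin) := by
          apply Submodule.eq_of_le_of_finrank_le hle
          rw [← h1, hranks i, hVr]
        rw [heq]
        exact le_sup_right
      obtain ⟨v, hv⟩ := hu
      have : (A i) *ᵥ u = (A i * J) *ᵥ v := by
        rw [← hv]; simp [Matrix.mulVec_mulVec, Matrix.mulVecLin_apply]
      rw [this]
      exact hsup ⟨v, rfl⟩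
    -- construct basis
    obtain ⟨W, hW⟩ := Submodule.exists_isCompl V
    have hWr : Module.finrank ℝ W = n - r := by
      have := Submodule.finrank_add_eq_of_isCompl hW
      simp only [hVr] at this
      have htop : Module.finrank ℝ (Fin n → ℝ) = n := by simp
      omega
    let bV : Module.Basis (Fin r) ℝ V := Module.finBasisOfFinrankEq ℝ V hVr
    obtain ⟨bN, hb1, hb2⟩ := exists_adapted_basis e V W hW bV
      (Module.finBasisOfFinrankEq ℝ W hWr)
    set S : Matrix (Fin n) (Fin n) ℝ := (Pi.basisFun ℝ (Fin n)).toMatrix ⇑bN with hS_def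
    have hSapp : ∀ x y, S x y = bN y x := by
      intro x y
      simp [hS_def, Module.Basis.toMatrix_apply]
    haveI : Invertible S := (Pi.basisFun ℝ (Fin n)).invertibleToMatrix bN
    have hSunit : IsUnit S := isUnit_of_invertible S
    have hSdet : IsUnit S.det := (Matrix.isUnit_iff_isUnit_det S).mp hSunit
    refine ⟨S⁻¹, Matrix.isUnit_nonsing_inv_iff.mpr hSunit, ?_⟩
    intro i p q
    rw [Matrix.nonsing_inv_nonsing_inv S hSdet]
    rw [← he, ← he]
    -- key claim: coordinates of elements of V vanish at inr positions
    have hcoord : ∀ u ∈ V, ∀ p' : Fin (n - r), (S⁻¹ *ᵥ u) (e (Sum.inr p')) = 0 := by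
      intro u hu p'
      have hrepr : S *ᵥ (fun y => bN.repr u y) = u := by
        funext x
        calc (S *ᵥ fun y => bN.repr u y) x = ∑ y, bN.repr u y * bN y x := by
              simp only [Matrix.mulVec, dotProduct]
              exact Finset.sum_congr rfl (fun y _ => by rw [hSapp, mul_comm])
          _ = (∑ y, bN.repr u y • bN y) x := by
              rw [Finset.sum_apply]
              exact Finset.sum_congr rfl (fun y _ => rfl)
          _ = u x := by rw [bN.sum_repr u]
      have hSinv : S⁻¹ *ᵥ u = fun y => bN.repr u y := by
        conv_lhs => rw [← hrepr]
        rw [Matrix.mulVec_mulVec, Matrix.nonsing_inv_mul S hSdet, Matrix.one_mulVec]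
      rw [hSinv]
      exact hb2 u hu p'
    -- the column of A i * S at e (inl q) is A i *ᵥ (bV q)
    have hcol : ∀ x, (A i * S) x (e (Sum.inl q)) = ((A i) *ᵥ ((bV q : Fin n → ℝ))) x := by
      intro x
      simp only [Matrix.mul_apply, Matrix.mulVec, dotProduct]
      refine Finset.sum_congr rfl (fun k _ => ?_)
      rw [hSapp, hb1]
    have hcolf : (fun k => (A i * S) k (e (Sum.inl q))) = (A i) *ᵥ ((bV q : Fin n → ℝ)) :=
      funext hcol
    have hgoal : (S⁻¹ * A i * S) (e (Sum.inr p)) (e (Sum.inl q)) =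
        (S⁻¹ *ᵥ ((A i) *ᵥ ((bV q : Fin n → ℝ)))) (e (Sum.inr p)) := by
      rw [Matrix.mul_assoc, ← hcolf]
      rfl
    rw [hgoal]
    exact hcoord _ (hinv i _ (bV q).2) p
end

section
/- Let n ≥ 1, let M ∈ Matrix (Fin n) (Fin n) ℂ, let k ≥ 1, and let W be a submodule of (Fin n → ℂ) with finrank ℂ W = k. Then W is M-invariant (M.mulVec v ∈ W for every v ∈ W) if and only if W has a basis consisting of a union of Jordan chains of M; precisely, if and only if there exist vectors b : Fin k → (Fin n → ℂ) that are linearly independent with Submodule.span ℂ (Set.range b) = W, and scalars lam : Fin k → ℂ, such that M.mulVec (b 0) = lam 0 • b 0, and for every i : Fin k with 0 < i.val, either M.mulVec (b i) = lam i • b i, or (M.mulVec (b i) = lam i • b i + b (i−1) and lam i = lam (i−1)). -/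
set_option linter.unusedSectionVars false
set_option maxHeartbeats 1000000

open Module Submodule

namespace JordanAux

variable {V : Type} [AddCommGroup V] [Module ℂ V]

def chainProp (f : Module.End ℂ V) (μ : ℂ) (l : List V) : Prop :=
  ∀ i < l.length, f (l.getD i 0) = μ • l.getD i 0 + (if i = 0 then 0 else l.getD (i-1) 0)

def vals (D : List (List V × ℂ)) : List V := D.flatMap Prod.fst

def flatP (D : List (List V × ℂ)) : List (V × ℂ) := D.flatMap (fun q => q.1.map (·, q.2))

def seqJP (f : Module.End ℂ V) (w : List (V × ℂ)) : Prop :=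
  ∀ i < w.length, f (w.getD i 0).1 = (w.getD i 0).2 • (w.getD i 0).1 ∨
    (0 < i ∧ f (w.getD i 0).1 = (w.getD i 0).2 • (w.getD i 0).1 + (w.getD (i-1) 0).1 ∧
      (w.getD i 0).2 = (w.getD (i-1) 0).2)

def goodD (f : Module.End ℂ V) (D : List (List V × ℂ)) : Prop :=
  ∀ q ∈ D, q.1 ≠ [] ∧ chainProp f q.2 q.1

lemma map_fst_flatP (D : List (List V × ℂ)) : (flatP D).map Prod.fst = vals D := by
  induction D with
  | nil => rfl
  | cons q D ih => simp only [flatP, vals, List.flatMap_cons, List.map_append] at *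
                   rw [ih, List.map_map]
                   have : (Prod.fst ∘ fun x : V => (x, q.2)) = id := rfl
                   rw [this, List.map_id]

lemma length_flatP (D : List (List V × ℂ)) : (flatP D).length = (vals D).length := by
  rw [← map_fst_flatP]; simp

lemma seqJP_append {f : Module.End ℂ V} {w w' : List (V × ℂ)}
    (h : seqJP f w) (h' : seqJP f w') : seqJP f (w ++ w') := by
  intro i hi
  rcases lt_or_ge i w.length with hlt | hge
  · rw [List.getD_append _ _ _ _ hlt]
    rcases h i hlt with h1 | ⟨hpos, h2, h3⟩
    · exact Or.inl h1
    · right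
      refine ⟨hpos, ?_, ?_⟩ <;> rw [List.getD_append _ _ _ _ (by omega)] <;> assumption
  · rw [List.getD_append_right _ _ _ _ hge]
    simp only [List.length_append] at hi
    rcases h' (i - w.length) (by omega) with h1 | ⟨hpos, h2, h3⟩
    · exact Or.inl h1
    · right
      have hpos' : 0 < i := by omega
      refine ⟨hpos', ?_, ?_⟩ <;>
        rw [List.getD_append_right _ _ _ _ (by omega),
          show i - 1 - w.length = i - w.length - 1 by omega] <;> assumption

lemma seqJP_single_chain {f : Module.End ℂ V} {μ : ℂ} {l : List V} (h : chainProp f μ l) :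
    seqJP f (l.map (·, μ)) := by
  intro i hi
  simp only [List.length_map] at hi
  have hg : ∀ j, (List.getD (l.map (·, μ)) j (0 : V × ℂ)).1 = l.getD j 0 ∧
      (j < l.length → (List.getD (l.map (·, μ)) j (0 : V × ℂ)).2 = μ) := by
    intro j
    rcases lt_or_ge j l.length with hj | hj
    · rw [List.getD_eq_getElem _ _ (by simpa using hj), List.getElem_map,
        List.getD_eq_getElem _ _ hj]
      exact ⟨rfl, fun _ => rfl⟩
    · rw [List.getD_eq_default _ _ (by simpa using hj), List.getD_eq_default _ _ (by simpa using hj)]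
      exact ⟨rfl, fun hc => absurd hc (by omega)⟩
  have h0 := (hg i).1
  have h0' := (hg i).2 hi
  have hc := h i hi
  by_cases hi0 : i = 0
  · left; subst hi0; rw [h0, h0', hc]; simp
  · right
    refine ⟨by omega, ?_, ?_⟩
    · rw [h0, h0', (hg (i-1)).1, hc, if_neg hi0]
    · rw [h0', (hg (i-1)).2 (by omega)]

lemma seqJP_flatP {f : Module.End ℂ V} {D : List (List V × ℂ)} (h : goodD f D) :
    seqJP f (flatP D) := by
  induction D with
  | nil => intro i hi; simp [flatP] at hi
  | cons q D ih =>
      have h1 : seqJP f (q.1.map (·, q.2)) := seqJP_single_chain (h q (by simp)).2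
      have h2 : seqJP f (flatP D) := ih (fun r hr => h r (by simp [hr]))
      exact seqJP_append h1 h2

lemma getD_map_coe (U : Submodule ℂ V) (l : List ↥U) (i : ℕ) :
    (l.map (Subtype.val : ↥U → V)).getD i 0 = ((l.getD i 0 : ↥U) : V) := by
  rcases lt_or_ge i l.length with hj | hj
  · rw [List.getD_eq_getElem _ _ (by simpa using hj), List.getElem_map,
      List.getD_eq_getElem _ _ hj]
  · rw [List.getD_eq_default _ _ (by simpa using hj), List.getD_eq_default _ _ (by simpa using hj)]
    rfl

lemma chainProp_map_coe {f : Module.End ℂ V} {U : Submodule ℂ V}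
    (hU : ∀ v ∈ U, f v ∈ U) {μ : ℂ} {l : List ↥U}
    (h : chainProp (f.restrict hU) μ l) :
    chainProp f μ (l.map (Subtype.val : ↥U → V)) := by
  intro i hi
  simp only [List.length_map] at hi
  have hc := h i hi
  rw [getD_map_coe, getD_map_coe]
  have : f ((l.getD i 0 : ↥U) : V) = ((f.restrict hU (l.getD i 0) : ↥U) : V) := rfl
  rw [this, hc]
  push_cast
  by_cases hi0 : i = 0 <;> simp [hi0]

lemma chainProp_extend {f : Module.End ℂ V} {μ : ℂ} {l : List V} {y : V}
    (h : chainProp f μ l) (hne : l ≠ [])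
    (hy : f y = μ • y + l.getD (l.length - 1) 0) :
    chainProp f μ (l ++ [y]) := by
  intro i hi
  simp only [List.length_append, List.length_singleton] at hi
  have hlen : 0 < l.length := List.length_pos_iff.mpr hne
  rcases lt_or_ge i l.length with hlt | hge
  · rw [List.getD_append _ _ _ _ hlt]
    have := h i hlt
    by_cases hi0 : i = 0
    · simpa [hi0] using this
    · rw [List.getD_append _ _ _ _ (by omega)]
      simpa [hi0] using this
  · have hieq : i = l.length := by omega
    subst hieq
    rw [List.getD_append_right _ _ _ _ hge]
    simp only [Nat.sub_self, List.getD_cons_zero]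
    rw [if_neg (by omega), List.getD_append _ _ _ _ (by omega)]
    exact hy

lemma chainProp_singleton {f : Module.End ℂ V} {μ : ℂ} {y : V} (hy : f y = μ • y) :
    chainProp f μ [y] := by
  intro i hi
  simp only [List.length_singleton] at hi
  interval_cases i
  simpa using hy

lemma mem_vals {D : List (List V × ℂ)} {x : V} :
    x ∈ vals D ↔ ∃ q ∈ D, x ∈ q.1 := by
  simp [vals, List.mem_flatMap]

lemma nodup_of_indep_get {l : List V}
    (h : LinearIndependent ℂ (fun i : Fin l.length => l.get i)) : l.Nodup :=
  List.nodup_iff_injective_get.mpr h.injective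

lemma indep_subtype_of_indep_get {l : List V}
    (h : LinearIndependent ℂ (fun i : Fin l.length => l.get i)) :
    LinearIndependent ℂ (fun x : {x : V // x ∈ l} => (x : V)) := by
  have hr : Set.range (fun i : Fin l.length => l.get i) = {x : V | x ∈ l} := by
    ext x
    simp [List.mem_iff_get, eq_comm]
  have : LinearIndependent ℂ (fun x : Set.range (fun i : Fin l.length => l.get i) => (x : V)) :=
    h.linearIndepOn_id
  rwa [hr] at this


lemma mem_vals' {D : List (List V × ℂ)} {x : V} (q : List V × ℂ) (hq : q ∈ D) (hx : x ∈ q.1) : x ∈ vals D := mem_vals.mpr ⟨q, hq, hx⟩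

theorem exists_jordan (k : ℕ) :
    ∀ (V : Type) [AddCommGroup V] [Module ℂ V] [FiniteDimensional ℂ V]
      (f : Module.End ℂ V), finrank ℂ V = k →
    ∃ D : List (List V × ℂ), goodD f D ∧ (vals D).length = k ∧
      LinearIndependent ℂ (fun i : Fin (vals D).length => (vals D).get i) ∧
      span ℂ {x : V | x ∈ vals D} = ⊤ := by
  induction k using Nat.strong_induction_on with
  | _ k IH =>
  intro V _ _ _ f hVk
  classical
  rcases Nat.eq_zero_or_pos k with hk0 | hkpos
  · subst hk0
    refine ⟨[], by simp [goodD], by simp [vals], ?_, ?_⟩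
    · have : IsEmpty (Fin (vals ([] : List (List V × ℂ))).length) := by
        simp [vals]; infer_instance
      exact linearIndependent_empty_type
    · haveI : Subsingleton V := finrank_zero_iff.mp hVk
      have : (⊤ : Submodule ℂ V) = ⊥ := Subsingleton.elim _ _
      rw [this, eq_bot_iff]
      exact span_le.mpr (by intro x hx; simp [Subsingleton.elim x (0:V)])
  -- k ≥ 1
  haveI : Nontrivial V := finrank_pos_iff.mp (hVk ▸ hkpos)
  obtain ⟨lam0, hlam0⟩ := Module.End.exists_eigenvalue f
  set g : Module.End ℂ V := f - lam0 • 1 with hg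
  have hcomm : ∀ v, g (f v) = f (g v) := by
    intro v; simp [hg, LinearMap.sub_apply, map_sub, map_smul]
  set U : Submodule ℂ V := LinearMap.range g with hUdef
  have hU : ∀ v ∈ U, f v ∈ U := by
    rintro v ⟨w, rfl⟩
    exact ⟨f w, hcomm w⟩
  set fU : Module.End ℂ ↥U := f.restrict hU with hfU
  set K : Submodule ℂ V := LinearMap.ker g with hKdef
  have hKne : K ≠ ⊥ := by
    have h1 : f.eigenspace lam0 ≠ ⊥ := Module.End.hasEigenvalue_iff.mp hlam0
    have h2 : f.eigenspace lam0 = K := by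
      rw [Module.End.eigenspace_def, hKdef, hg]
    rwa [h2] at h1
  have hKpos : 0 < finrank ℂ ↥K := by
    obtain ⟨x, hxK, hxne⟩ := Submodule.ne_bot_iff K |>.mp hKne
    haveI : Nontrivial ↥K := ⟨⟨x, hxK⟩, 0, by simp [hxne, Subtype.ext_iff]⟩
    exact finrank_pos_iff.mpr this
  have hrk : finrank ℂ ↥U + finrank ℂ ↥K = k := by
    rw [← hVk]; exact LinearMap.finrank_range_add_finrank_ker g
  set r : ℕ := finrank ℂ ↥U with hrdef
  have hrlt : r < k := by omega
  obtain ⟨DU, hDUgood, hDUlen, hDUindep, hDUspan⟩ := IH r hrlt ↥U fU rfl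
  -- preimage picker
  have hpick : ∀ u : ↥U, ∃ y : V, g y = (u : V) := fun u => LinearMap.mem_range.mp u.2
  choose pickf hpickf using hpick
  -- complement of U ∩ K inside K
  set J' : Submodule ℂ ↥K := Submodule.comap K.subtype U with hJ'def
  obtain ⟨C, hC⟩ := Submodule.exists_isCompl J'
  set s : ℕ := finrank ℂ ↥C with hsdef
  set bz : Basis (Fin s) ℂ ↥C := finBasis ℂ ↥C with hbz
  set z : Fin s → V := fun i => ((bz i : ↥K) : V) with hz
  set zchains : List (List V × ℂ) := (List.finRange s).map (fun i => ([z i], lam0)) with hzch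
  set topv : List ↥U × ℂ → ↥U := fun q => q.1.getD (q.1.length - 1) 0 with htopv
  set ext : List ↥U × ℂ → List V × ℂ := fun q =>
    if q.2 = lam0 then (q.1.map (Subtype.val) ++ [pickf (topv q)], lam0)
    else (q.1.map (Subtype.val), q.2) with hext
  set D' : List (List V × ℂ) := DU.map ext ++ zchains with hD'
  set p : ℕ := (DU.filter (fun q => q.2 = lam0)).length with hp
  -- basic membership facts
  have hextmem : ∀ q ∈ DU, ext q ∈ D' := by
    intro q hq
    rw [hD', List.mem_append]
    exact Or.inl (List.mem_map_of_mem hq)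
  have hcoe_sub : ∀ q : List ↥U × ℂ, (q.1.map (Subtype.val : ↥U → V)) ⊆ (ext q).1 := by
    intro q
    simp only [hext]
    by_cases h2 : q.2 = lam0
    · rw [if_pos h2]; exact fun x hx => List.mem_append_left _ hx
    · rw [if_neg h2]; exact fun x hx => hx
  have hcoe_mem : ∀ q ∈ DU, ∀ x ∈ q.1, ((x : ↥U) : V) ∈ vals D' := by
    intro q hq x hx
    exact mem_vals' (ext q) (hextmem q hq) (hcoe_sub q (List.mem_map_of_mem hx))
  have hpick_mem : ∀ q ∈ DU, q.2 = lam0 → pickf (topv q) ∈ vals D' := by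
    intro q hq h2
    refine mem_vals' (ext q) (hextmem q hq) ?_
    simp only [hext]; simp only [if_pos h2]
    exact List.mem_append_right _ (by simp)
  have hz_mem : ∀ i : Fin s, z i ∈ vals D' := by
    intro i
    refine mem_vals' ([z i], lam0) ?_ (by simp)
    rw [hD', List.mem_append, hzch]
    exact Or.inr (List.mem_map_of_mem (List.mem_finRange i))
  -- goodness
  have hzK : ∀ i : Fin s, z i ∈ K := fun i => ((bz i : ↥K)).2
  have hzeig : ∀ i : Fin s, f (z i) = lam0 • z i := by
    intro i
    have h0 : g (z i) = 0 := LinearMap.mem_ker.mp (hzK i)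
    have : f (z i) - lam0 • z i = 0 := by
      rw [← h0, hg]; simp [LinearMap.sub_apply]
    linear_combination (norm := module) this
  have hchainU : ∀ q ∈ DU, chainProp f q.2 (q.1.map (Subtype.val : ↥U → V)) := by
    intro q hq
    exact chainProp_map_coe hU (hDUgood q hq).2
  have hgood' : goodD f D' := by
    intro q' hq'
    rw [hD', List.mem_append] at hq'
    rcases hq' with hq' | hq'
    · obtain ⟨q, hq, rfl⟩ := List.mem_map.mp hq'
      by_cases h2 : q.2 = lam0
      · constructor
        · simp only [hext]; simp only [if_pos h2]; simp
        · simp only [hext]; simp only [if_pos h2]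
          apply chainProp_extend (h2 ▸ hchainU q hq)
          · intro hc
            exact (hDUgood q hq).1 (List.map_eq_nil_iff.mp hc)
          · have hgp := hpickf (topv q)
            have hfp : f (pickf (topv q)) - lam0 • pickf (topv q) = ((topv q : ↥U) : V) := by
              rw [← hgp, hg]; simp [LinearMap.sub_apply]
            have hgetD : ((q.1.map (Subtype.val : ↥U → V)).getD
                ((q.1.map (Subtype.val : ↥U → V)).length - 1) 0) = ((topv q : ↥U) : V) := by
              rw [List.length_map, getD_map_coe, htopv]
            rw [hgetD, ← hfp]
            abel
      · constructor
        · simp only [hext]; simp only [if_neg h2]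
          intro hc
          exact (hDUgood q hq).1 (List.map_eq_nil_iff.mp hc)
        · simp only [hext]; simp only [if_neg h2]
          exact hchainU q hq
    · rw [hzch] at hq'
      obtain ⟨i, _, rfl⟩ := List.mem_map.mp hq'
      exact ⟨by simp, chainProp_singleton (hzeig i)⟩
  -- length
  have hextlen : ∀ q : List ↥U × ℂ, (ext q).1.length =
      q.1.length + (if q.2 = lam0 then 1 else 0) := by
    intro q
    simp only [hext]
    split <;> simp
  have haux : ∀ E : List (List ↥U × ℂ), (vals (E.map ext)).length =
      (vals E).length + (E.filter (fun q => q.2 = lam0)).length := by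
    intro E
    induction E with
    | nil => simp [vals]
    | cons q E ih =>
        simp only [List.map_cons, vals, List.flatMap_cons, List.length_append] at ih ⊢
        rw [hextlen q]
        by_cases h2 : q.2 = lam0
        · rw [List.filter_cons_of_pos (by simpa using h2), List.length_cons, if_pos h2]
          omega
        · rw [List.filter_cons_of_neg (by simpa using h2), if_neg h2]
          omega
  have hzlen : (vals zchains).length = s := by
    rw [hzch]
    simp only [vals, List.length_flatMap, List.map_map]
    rw [show ((fun a : List V × ℂ => a.1.length) ∘ fun i : Fin s => ([z i], lam0)) = fun _ => 1 from rfl]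
    simp
  have hlen' : (vals D').length = r + p + s := by
    rw [hD']
    simp only [vals, List.flatMap_append, List.length_append]
    have h1 := haux DU
    simp only [vals] at h1 hzlen hDUlen
    rw [h1, hzlen, hDUlen, hp]
  -- S and spanning
  set S : Submodule ℂ V := span ℂ {x : V | x ∈ vals D'} with hS
  have hUspan : span ℂ ((Subtype.val : ↥U → V) '' {x : ↥U | x ∈ vals DU}) = U := by
    have : (Subtype.val : ↥U → V) '' {x : ↥U | x ∈ vals DU}
        = ⇑U.subtype '' {x : ↥U | x ∈ vals DU} := rfl
    rw [this, Submodule.span_image, hDUspan, Submodule.map_subtype_top]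
  have hUS : U ≤ S := by
    rw [← hUspan]
    apply span_le.mpr
    rintro x ⟨y, hy, rfl⟩
    obtain ⟨q, hq, hyq⟩ := mem_vals.mp hy
    exact subset_span (hcoe_mem q hq y hyq)
  have hgetD_mem : ∀ (q : List ↥U × ℂ), ∀ i < q.1.length, q.1.getD i 0 ∈ q.1 := by
    intro q i hi
    rw [List.getD_eq_getElem _ _ hi]
    exact List.getElem_mem hi
  have hgf : ∀ x : V, g x = f x - lam0 • x := by
    intro x; rw [hg]; simp [LinearMap.sub_apply]
  have hchainmem : ∀ q ∈ DU, ∀ i < q.1.length,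
      ((q.1.getD i 0 : ↥U) : V) ∈ Submodule.map g S := by
    intro q hq
    have hchV := hchainU q hq
    by_cases h2 : q.2 = lam0
    · intro i hi
      rcases eq_or_lt_of_le (Nat.succ_le_of_lt hi) with htop | hnext
      · have hteq : q.1.getD i 0 = topv q := by
          rw [htopv]; congr 1; omega
        rw [hteq]
        exact ⟨pickf (topv q), subset_span (hpick_mem q hq h2), hpickf (topv q)⟩
      · have hc := hchV (i+1) (by simpa using hnext)
        rw [getD_map_coe, if_neg (by omega), Nat.add_sub_cancel, getD_map_coe] at hc
        have hxS : ((q.1.getD (i+1) 0 : ↥U) : V) ∈ S :=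
          subset_span (hcoe_mem q hq _ (hgetD_mem q (i+1) hnext))
        refine ⟨_, hxS, ?_⟩
        rw [hgf, hc, h2]
        abel
    · intro i
      induction i using Nat.strong_induction_on with
      | _ i IHi =>
      intro hi
      have hc := hchV i (by simpa using hi)
      rw [getD_map_coe] at hc
      have hxS : ((q.1.getD i 0 : ↥U) : V) ∈ S :=
        subset_span (hcoe_mem q hq _ (hgetD_mem q i hi))
      have hprev : (if i = 0 then (0:V) else ((q.1.map (Subtype.val : ↥U → V)).getD (i-1) 0))
          ∈ Submodule.map g S := by
        split
        · exact Submodule.zero_mem _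
        · rw [getD_map_coe]
          exact IHi (i-1) (by omega) (by omega)
      have hgxm : g ((q.1.getD i 0 : ↥U) : V) ∈ Submodule.map g S := ⟨_, hxS, rfl⟩
      have hne0 : q.2 - lam0 ≠ 0 := sub_ne_zero.mpr h2
      have hkey : ((q.1.getD i 0 : ↥U) : V) = (q.2 - lam0)⁻¹ •
          (g ((q.1.getD i 0 : ↥U) : V) -
            (if i = 0 then (0:V) else ((q.1.map (Subtype.val : ↥U → V)).getD (i-1) 0))) := by
        set X := ((q.1.getD i 0 : ↥U) : V) with hX
        set P := (if i = 0 then (0:V) else ((q.1.map (Subtype.val : ↥U → V)).getD (i-1) 0)) with hP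
        rw [hgf, hc, show q.2 • X + P - lam0 • X - P = (q.2 - lam0) • X by module,
          smul_smul, inv_mul_cancel₀ hne0, one_smul]
      rw [hkey]
      exact Submodule.smul_mem _ _ (Submodule.sub_mem _ hgxm hprev)
  have hUmapg : U ≤ Submodule.map g S := by
    rw [← hUspan]
    apply span_le.mpr
    rintro x ⟨y, hy, rfl⟩
    obtain ⟨q, hq, hyq⟩ := mem_vals.mp hy
    obtain ⟨j, hj⟩ := List.mem_iff_get.mp hyq
    have : y = q.1.getD j.val 0 := by
      rw [List.getD_eq_getElem _ _ j.isLt]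
      exact hj.symm ▸ (by simp [List.get_eq_getElem])
    rw [this]
    exact hchainmem q hq j.val j.isLt
  have hKS : K ≤ S := by
    have h1 : K = Submodule.map K.subtype ⊤ := (Submodule.map_subtype_top K).symm
    have h2 : (⊤ : Submodule ℂ ↥K) = J' ⊔ C := hC.sup_eq_top.symm
    rw [h1, h2, Submodule.map_sup]
    apply sup_le
    · have hle : Submodule.map K.subtype J' ≤ U := by
        rw [hJ'def, Submodule.map_comap_subtype]
        exact inf_le_right
      exact le_trans hle hUS
    · have hCeq : C = Submodule.map C.subtype ⊤ := (Submodule.map_subtype_top C).symm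
      have hCspan : (⊤ : Submodule ℂ ↥C) = span ℂ (Set.range bz) := bz.span_eq.symm
      rw [hCeq, hCspan, Submodule.map_span, Submodule.map_span]
      apply span_le.mpr
      intro x hx
      simp only [Set.image_image, ← Set.range_comp] at hx
      obtain ⟨i, rfl⟩ := hx
      exact subset_span (hz_mem i)
  have hspan' : S = ⊤ := by
    rw [eq_top_iff]
    intro v _
    have hgv : g v ∈ U := ⟨v, rfl⟩
    obtain ⟨w, hwS, hww⟩ := hUmapg hgv
    have hvw : v - w ∈ K := by
      simp only [hKdef, LinearMap.mem_ker, map_sub, hww, sub_self]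
    have : v = w + (v - w) := by abel
    rw [this]
    exact S.add_mem hwS (hKS hvw)
  -- counting
  set heads : List ↥U := DU.filterMap (fun q => if q.2 = lam0 then q.1.head? else none)
    with hheads
  have hheadaux : ∀ E : List (List ↥U × ℂ), goodD fU E →
      (E.filterMap (fun q => if q.2 = lam0 then q.1.head? else none)).length =
        (E.filter (fun q => q.2 = lam0)).length ∧
      (E.filterMap (fun q => if q.2 = lam0 then q.1.head? else none)).Sublist (vals E) := by
    intro E
    induction E with
    | nil => intro _; simp [vals]
    | cons q E ih =>
        intro hgE
        obtain ⟨ih1, ih2⟩ := ih (fun q' hq' => hgE q' (List.mem_cons_of_mem _ hq'))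
        have hqne := (hgE q List.mem_cons_self).1
        by_cases h2 : q.2 = lam0
        · obtain ⟨a, t, hat⟩ : ∃ a t, q.1 = a :: t := by
            cases hq1 : q.1 with
            | nil => exact absurd hq1 hqne
            | cons a t => exact ⟨a, t, rfl⟩
          have hsome : (fun q : List ↥U × ℂ => if q.2 = lam0 then q.1.head? else none) q
              = some a := by
            simp only [if_pos h2, hat, List.head?_cons]
          simp only [List.filterMap_cons, hsome]
          constructor
          · rw [List.filter_cons_of_pos (by simpa using h2)]
            simp [ih1]
          · have hveq : vals (q :: E) = (a :: t) ++ vals E := by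
              rw [show vals (q :: E) = q.1 ++ vals E from rfl, hat]
            rw [hveq, List.cons_append]
            exact List.Sublist.cons₂ a (ih2.trans (List.sublist_append_right t (vals E)))
        · have hnone : (fun q : List ↥U × ℂ => if q.2 = lam0 then q.1.head? else none) q
              = none := by simp only [if_neg h2]
          simp only [List.filterMap_cons, hnone]
          constructor
          · rw [List.filter_cons_of_neg (by simpa using h2)]
            exact ih1
          · have hveq : vals (q :: E) = q.1 ++ vals E := rfl
            rw [hveq]
            exact ih2.trans (List.sublist_append_right q.1 (vals E))
  obtain ⟨hheadslen, hheadssub⟩ := hheadaux DU hDUgood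
  rw [← hheads] at hheadslen hheadssub
  have hheadmem : ∀ x ∈ heads, x ∈ vals DU ∧ fU x = lam0 • x := by
    intro x hx
    rw [hheads] at hx
    obtain ⟨q, hq, hqx⟩ := List.mem_filterMap.mp hx
    by_cases h2 : q.2 = lam0
    · rw [if_pos h2] at hqx
      obtain ⟨a, t, hat⟩ : ∃ a t, q.1 = a :: t := by
        cases hq1 : q.1 with
        | nil => rw [hq1] at hqx; simp at hqx
        | cons a t => exact ⟨a, t, rfl⟩
      rw [hat, List.head?_cons, Option.some_inj] at hqx
      constructor
      · refine mem_vals' q hq ?_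
        rw [hat, ← hqx]
        exact List.mem_cons_self
      · have hc := (hDUgood q hq).2 0 (by rw [hat]; simp)
        rw [if_pos rfl, add_zero, h2] at hc
        have hg0 : q.1.getD 0 0 = x := by rw [hat, ← hqx]; rfl
        rwa [hg0] at hc
    · rw [if_neg h2] at hqx
      simp at hqx
  have hheadnodup : heads.Nodup := hheadssub.nodup (nodup_of_indep_get hDUindep)
  set JV : Submodule ℂ V := U ⊓ K with hJV
  have hheadJV : ∀ x ∈ heads, ((x : ↥U) : V) ∈ JV := by
    intro x hx
    refine ⟨x.2, ?_⟩
    have heig := (hheadmem x hx).2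
    have hfx : f ((x : ↥U) : V) = lam0 • ((x : ↥U) : V) := by
      have : f ((x : ↥U) : V) = ((fU x : ↥U) : V) := rfl
      rw [this, heig]; push_cast; ring_nf
    show ((x : ↥U) : V) ∈ LinearMap.ker g
    rw [LinearMap.mem_ker, hgf, hfx, sub_self]
  have hindepDUset : LinearIndependent ℂ
      (fun x : {x : ↥U // x ∈ vals DU} => ((x : ↥U) : V)) := by
    have h1 := indep_subtype_of_indep_get hDUindep
    exact h1.map' U.subtype (Submodule.ker_subtype U)
  have hembinj : Function.Injective
      (fun i : Fin heads.length => (⟨heads.get i,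
        (hheadmem _ (heads.get_mem i)).1⟩ : {x : ↥U // x ∈ vals DU})) := by
    intro i j hij
    have : heads.get i = heads.get j := congrArg Subtype.val hij
    exact List.nodup_iff_injective_get.mp hheadnodup this
  have hfamV : LinearIndependent ℂ
      (fun i : Fin heads.length => ((heads.get i : ↥U) : V)) :=
    hindepDUset.comp _ hembinj
  have hfamJ : LinearIndependent ℂ (fun i : Fin heads.length =>
      (⟨((heads.get i : ↥U) : V), hheadJV _ (heads.get_mem i)⟩ : ↥JV)) := by
    apply LinearIndependent.of_comp JV.subtype
    exact hfamV
  have hple : p ≤ finrank ℂ ↥J' := by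
    have h1 : heads.length ≤ finrank ℂ ↥JV := by
      simpa using hfamJ.fintype_card_le_finrank
    have h2 : finrank ℂ ↥J' = finrank ℂ ↥JV := by
      have he : J' ≃ₗ[ℂ] Submodule.map K.subtype J' :=
        Submodule.equivMapOfInjective K.subtype (Submodule.injective_subtype K) J'
      rw [he.finrank_eq, hJ'def, Submodule.map_comap_subtype, hJV, inf_comm]
    omega
  have hJC : finrank ℂ ↥J' + s = finrank ℂ ↥K := by
    rw [hsdef]
    exact Submodule.finrank_add_eq_of_isCompl hC
  have hmle : (vals D').length ≤ k := by rw [hlen']; omega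
  have hmge : k ≤ (vals D').length := by
    have hb0 : Set.range (fun i : Fin (vals D').length => (vals D').get i)
        = {x : V | x ∈ vals D'} := by
      ext x
      simp [List.mem_iff_get, eq_comm]
    have h1 : finrank ℂ ↥(span ℂ (Set.range (fun i : Fin (vals D').length => (vals D').get i)))
        ≤ Fintype.card (Fin (vals D').length) :=
      finrank_range_le_card (R := ℂ) (fun i : Fin (vals D').length => (vals D').get i)
    rw [hb0] at h1
    have h2 : finrank ℂ ↥(span ℂ {x : V | x ∈ vals D'}) = k := by
      rw [← hS, hspan', finrank_top, hVk]
    rw [h2] at h1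
    simpa using h1
  have hmk : (vals D').length = k := le_antisymm hmle hmge
  have hindep' : LinearIndependent ℂ (fun i : Fin (vals D').length => (vals D').get i) := by
    apply linearIndependent_of_top_le_span_of_card_eq_finrank
    · rw [← hspan', hS]
      apply span_mono
      intro x hx
      obtain ⟨i, hi⟩ := List.mem_iff_get.mp hx
      exact ⟨i, hi⟩
    · simp [hmk, hVk]
  exact ⟨D', hgood', hmk, hindep', hspan'⟩

theorem exists_jordan_fin (V : Type) [AddCommGroup V] [Module ℂ V] [FiniteDimensional ℂ V]
    (f : Module.End ℂ V) (k : ℕ) (hk : finrank ℂ V = k) :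
    ∃ (b : Fin k → V) (lam : Fin k → ℂ), LinearIndependent ℂ b ∧
      span ℂ (Set.range b) = ⊤ ∧
      ∀ i : Fin k, f (b i) = lam i • b i ∨
        (0 < i.val ∧ f (b i) = lam i • b i + b ⟨i.val - 1, by omega⟩ ∧
          lam i = lam ⟨i.val - 1, by omega⟩) := by
  obtain ⟨D, hgood, hlen, hindep, hspan⟩ := exists_jordan k V f hk
  set w : List (V × ℂ) := flatP D with hw
  have hwlen : w.length = k := by rw [hw, length_flatP, hlen]
  have hv2 : vals D = w.map Prod.fst := by rw [hw, map_fst_flatP]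
  have hbv : ∀ i : ℕ, (w.getD i 0).1 = (vals D).getD i 0 := by
    intro i
    rw [hv2]
    rcases lt_or_ge i w.length with hj | hj
    · rw [List.getD_eq_getElem _ _ hj, List.getD_eq_getElem _ _ (by simpa using hj),
        List.getElem_map]
    · rw [List.getD_eq_default _ _ (by simpa using hj), List.getD_eq_default _ _ (by simpa using hj)]
      rfl
  refine ⟨fun i => (w.getD i 0).1, fun i => (w.getD i 0).2, ?_, ?_, ?_⟩
  · have heq : (fun i : Fin k => (w.getD i 0).1)
        = (fun j : Fin (vals D).length => (vals D).get j) ∘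
          (Fin.cast (by rw [hlen] : k = (vals D).length)) := by
      funext i
      simp only [Function.comp_apply]
      rw [hbv, List.getD_eq_getElem _ _ (by simp [hlen, i.isLt])]
      rfl
    rw [heq]
    exact hindep.comp _ (Fin.cast_injective _)
  · have hre : Set.range (fun i : Fin k => (w.getD i 0).1) = {x : V | x ∈ vals D} := by
      ext x
      constructor
      · rintro ⟨i, rfl⟩
        show (w.getD i.val 0).1 ∈ vals D
        rw [hbv, List.getD_eq_getElem _ _ (by omega)]
        exact List.getElem_mem _
      · intro hx
        obtain ⟨j, hj⟩ := List.mem_iff_get.mp hx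
        refine ⟨⟨j.val, by omega⟩, ?_⟩
        show (w.getD j.val 0).1 = x
        rw [hbv, List.getD_eq_getElem _ _ j.isLt]
        exact hj ▸ rfl
    rw [hre, hspan]
  · intro i
    have hs := seqJP_flatP hgood i.val (by rw [← hw] at *; omega)
    rw [← hw] at hs
    rcases hs with h1 | ⟨hpos, h2, h3⟩
    · exact Or.inl h1
    · exact Or.inr ⟨hpos, h2, h3⟩

end JordanAux

theorem invariant_subspace_iff_jordan_vectors_basis
    (n k : ℕ) (hn : 1 ≤ n) (hk : 1 ≤ k)
    (M : Matrix (Fin n) (Fin n) ℂ)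
    (W : Submodule ℂ (Fin n → ℂ)) (hW : Module.finrank ℂ W = k) :
    (∀ v ∈ W, M.mulVec v ∈ W) ↔
    (∃ (b : Fin k → (Fin n → ℂ)) (lam : Fin k → ℂ),
      LinearIndependent ℂ b ∧
      Submodule.span ℂ (Set.range b) = W ∧
      M.mulVec (b ⟨0, by omega⟩) = lam ⟨0, by omega⟩ • b ⟨0, by omega⟩ ∧
      ∀ i : Fin k, 0 < i.val →
        (M.mulVec (b i) = lam i • b i ∨
          (M.mulVec (b i) = lam i • b i + b ⟨i.val - 1, by omega⟩ ∧
            lam i = lam ⟨i.val - 1, by omega⟩))) := by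
  constructor
  · intro hinv
    have hT : ∀ v ∈ W, M.mulVecLin v ∈ W := by
      intro v hv
      simpa [Matrix.mulVecLin_apply] using hinv v hv
    set fW : Module.End ℂ ↥W := (M.mulVecLin).restrict hT with hfW
    obtain ⟨bW, lamW, hind, hspanW, hJP⟩ := JordanAux.exists_jordan_fin ↥W fW k hW
    have hM : ∀ x : ↥W, M.mulVec (x : Fin n → ℂ) = ((fW x : ↥W) : Fin n → ℂ) := by
      intro x
      rw [hfW, LinearMap.restrict_coe_apply, Matrix.mulVecLin_apply]
    refine ⟨fun i => ((bW i : ↥W) : Fin n → ℂ), lamW, ?_, ?_, ?_, ?_⟩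
    · exact hind.map' W.subtype (Submodule.ker_subtype W)
    · have : Set.range (fun i => ((bW i : ↥W) : Fin n → ℂ)) = ⇑W.subtype '' Set.range bW := by
        rw [← Set.range_comp]; rfl
      rw [this, Submodule.span_image, hspanW, Submodule.map_subtype_top]
    · rcases hJP ⟨0, by omega⟩ with h1 | ⟨hpos, _, _⟩
      · rw [hM, h1]; push_cast; rfl
      · simp at hpos
    · intro i hi
      rcases hJP i with h1 | ⟨hpos, h2, h3⟩
      · left; rw [hM, h1]; push_cast; rfl
      · right
        refine ⟨?_, h3⟩
        rw [hM, h2]; push_cast; rfl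
  · rintro ⟨b, lam, hind, hspan, h0, hrest⟩ v hv
    have hbW : ∀ j : Fin k, b j ∈ W := by
      intro j
      rw [← hspan]
      exact Submodule.subset_span ⟨j, rfl⟩
    have hle : W ≤ Submodule.comap M.mulVecLin W := by
      nth_rewrite 1 [← hspan]
      apply Submodule.span_le.mpr
      rintro x ⟨i, rfl⟩
      show M.mulVecLin (b i) ∈ W
      rw [Matrix.mulVecLin_apply]
      rcases Nat.eq_zero_or_pos i.val with hiv | hiv
      · have : i = ⟨0, by omega⟩ := by ext; exact hiv
        rw [this, h0]
        exact Submodule.smul_mem _ _ (hbW _)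
      · rcases hrest i hiv with h1 | ⟨h2, _⟩
        · rw [h1]; exact Submodule.smul_mem _ _ (hbW _)
        · rw [h2]
          exact Submodule.add_mem _ (Submodule.smul_mem _ _ (hbW _)) (hbW _)
    have := hle hv
    simpa [Matrix.mulVecLin_apply] using this
end

section
/- Let τ > 0 and ω > 0 be real numbers. Then (I·ω)² − (I·ω)·(1 + Complex.exp(−τ·(I·ω))) + 1 = 0 if and only if ω = 1 and there exists a natural number k with τ = (2·k + 1)·π. In other words, the characteristic function s² − s(1 + e^{−τs}) + 1 of the subsystem ż = Ā₁₁ z(t) + B̄₁₁ z(t − τ) has a root on the open upper imaginary axis exactly at the crossing frequency ω = 1, with corresponding delays τ = π, 3π, 5π, …. -/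
theorem subsystem5_crossing_frequencies
    (τ ω : ℝ) (hτ : 0 < τ) (hω : 0 < ω) :
    ((Complex.I * ω) ^ 2
        - (Complex.I * ω) * (1 + Complex.exp (-(τ : ℂ) * (Complex.I * ω))) + 1 = 0) ↔
    (ω = 1 ∧ ∃ k : ℕ, τ = (2 * k + 1) * Real.pi) := by
  have hexp : Complex.exp (-(τ : ℂ) * (Complex.I * ω))
      = (Real.cos (τ * ω) : ℂ) - (Real.sin (τ * ω) : ℂ) * Complex.I := by
    rw [show -(τ:ℂ)*(Complex.I*ω) = ((-(τ*ω):ℝ):ℂ)*Complex.I by push_cast; ring,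
      Complex.exp_mul_I]
    push_cast
    simp [Real.cos_neg, Real.sin_neg]
    ring
  rw [hexp]
  constructor
  · intro h
    set c := Real.cos (τ * ω) with hcdef
    set s := Real.sin (τ * ω) with hsdef
    have key : (Complex.I * ω) ^ 2 - (Complex.I * ω) * (1 + ((c : ℂ) - (s : ℂ) * Complex.I)) + 1
        = ((1 - ω ^ 2 - ω * s : ℝ) : ℂ) + ((-ω - ω * c : ℝ) : ℂ) * Complex.I := by
      simp only [Complex.ext_iff, Complex.add_re, Complex.add_im, Complex.sub_re,
        Complex.sub_im, Complex.mul_re, Complex.mul_im, Complex.one_re, Complex.one_im,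
        Complex.I_re, Complex.I_im, Complex.ofReal_re, Complex.ofReal_im, pow_two]
      constructor <;> ring
    rw [key] at h
    rw [Complex.ext_iff] at h
    simp only [Complex.add_re, Complex.add_im, Complex.mul_re, Complex.mul_im,
      Complex.ofReal_re, Complex.ofReal_im, Complex.I_re, Complex.I_im, Complex.zero_re,
      Complex.zero_im] at h
    obtain ⟨hre, him⟩ := h
    have hc : c = -1 := by
      have : ω * (1 + c) = 0 := by linarith
      have h1 : 1 + c = 0 := by
        rcases mul_eq_zero.1 this with h' | h'
        · exact absurd h' (ne_of_gt hω)
        · exact h'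
      linarith
    have hcs : s ^ 2 + c ^ 2 = 1 := Real.sin_sq_add_cos_sq (τ * ω)
    have hs : s = 0 := by nlinarith
    have hω1 : ω = 1 := by
      have h1 : (ω - 1) * (ω + 1) = 0 := by nlinarith
      rcases mul_eq_zero.1 h1 with h' | h' <;> linarith
    refine ⟨hω1, ?_⟩
    have hcτ : Real.cos τ = -1 := by
      rw [hcdef, hω1, mul_one] at hc; exact hc
    have : Real.cos (τ + Real.pi) = 1 := by rw [Real.cos_add_pi, hcτ]; ring
    obtain ⟨n, hn⟩ := (Real.cos_eq_one_iff _).1 this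
    have hτn : τ = (2 * n - 1) * Real.pi := by
      have hπ := Real.pi_pos
      nlinarith [hn]
    have hn1 : 1 ≤ n := by
      by_contra hlt
      push_neg at hlt
      have : (n : ℝ) ≤ 0 := by exact_mod_cast Int.lt_add_one_iff.1 hlt
      nlinarith [Real.pi_pos]
    refine ⟨(n - 1).toNat, ?_⟩
    have hnt : ((n - 1).toNat : ℝ) = (n : ℝ) - 1 := by
      have h0 : ((n - 1).toNat : ℤ) = n - 1 := Int.toNat_of_nonneg (by omega)
      have h1 := congrArg (fun z : ℤ => (z : ℝ)) h0
      push_cast at h1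
      linarith
    rw [hτn, hnt]
    ring
  · rintro ⟨hω1, k, hk⟩
    subst hω1 hk
    have hc : Real.cos ((2 * (k:ℝ) + 1) * Real.pi * 1) = -1 := by
      rw [mul_one, show (2*(k:ℝ)+1)*Real.pi = Real.pi + (k:ℤ)*(2*Real.pi) by push_cast; ring,
        Real.cos_add_int_mul_two_pi, Real.cos_pi]
    have hs : Real.sin ((2 * (k:ℝ) + 1) * Real.pi * 1) = 0 := by
      rw [mul_one, show (2*(k:ℝ)+1)*Real.pi = Real.pi + (k:ℤ)*(2*Real.pi) by push_cast; ring,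
        Real.sin_add_int_mul_two_pi, Real.sin_pi]
    rw [hc, hs]
    push_cast
    ring_nf
    simp [Complex.I_sq]
end

section
/- Let τ > 0 and ω > 0 be real numbers. Then (I·ω)² + 2 + Complex.exp(−τ·(I·ω)) = 0 if and only if either (ω = Real.sqrt 3 and there exists a positive natural number k with τ = 2·k·π / Real.sqrt 3) or (ω = 1 and there exists a natural number k with τ = (2·k + 1)·π). In other words, the characteristic function s² + 2 + e^{−τs} of the subsystem ż = Ā₂₂ z(t) + B̄₂₂ z(t − τ) has roots on the open upper imaginary axis exactly at the crossing frequencies ω = √3 (delays τ = 2kπ/√3) and ω = 1 (delays τ = π + 2kπ). -/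
theorem subsystem6_crossing_frequencies
    (τ ω : ℝ) (hτ : 0 < τ) (hω : 0 < ω) :
    ((Complex.I * ω) ^ 2 + 2 + Complex.exp (-(τ : ℂ) * (Complex.I * ω)) = 0) ↔
    ((ω = Real.sqrt 3 ∧ ∃ k : ℕ, 0 < k ∧ τ = 2 * k * Real.pi / Real.sqrt 3) ∨
      (ω = 1 ∧ ∃ k : ℕ, τ = (2 * k + 1) * Real.pi)) := by
  have harg : -(τ : ℂ) * (Complex.I * ω) = ((-(τ * ω) : ℝ) : ℂ) * Complex.I := by
    push_cast; ring
  have hexp : Complex.exp (-(τ : ℂ) * (Complex.I * ω))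
      = ((Real.cos (τ * ω) : ℝ) : ℂ) + ((-Real.sin (τ * ω) : ℝ) : ℂ) * Complex.I := by
    rw [harg, Complex.exp_mul_I, ← Complex.ofReal_cos, ← Complex.ofReal_sin,
      Real.cos_neg, Real.sin_neg]
  have hsq : (Complex.I * (ω : ℂ)) ^ 2 = ((-(ω ^ 2) : ℝ) : ℂ) := by
    rw [mul_pow, Complex.I_sq]; push_cast; ring
  have key : ((Complex.I * ω) ^ 2 + 2 + Complex.exp (-(τ : ℂ) * (Complex.I * ω)) = 0)
      ↔ (Real.cos (τ * ω) = ω ^ 2 - 2 ∧ Real.sin (τ * ω) = 0) := by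
    rw [hsq, hexp]
    constructor
    · intro h
      have h1 := congrArg Complex.re h
      have h2 := congrArg Complex.im h
      simp only [Complex.add_re, Complex.add_im, Complex.mul_re, Complex.mul_im,
        Complex.ofReal_re, Complex.ofReal_im, Complex.I_re, Complex.I_im, Complex.zero_re,
        Complex.zero_im, mul_zero, mul_one, zero_mul, sub_zero, add_zero, zero_add,
        neg_zero, zero_sub, neg_neg] at h1 h2
      norm_num at h1 h2
      constructor <;> linarith
    · rintro ⟨h1, h2⟩
      rw [h1, h2]
      push_cast; ring
  rw [key]
  have hπ := Real.pi_pos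
  constructor
  · rintro ⟨hcos, hsin⟩
    rw [Real.sin_eq_zero_iff] at hsin
    obtain ⟨n, hn⟩ := hsin
    have hnpos : 0 < n := by
      by_contra h
      push_neg at h
      have : (n : ℝ) * Real.pi ≤ 0 :=
        mul_nonpos_of_nonpos_of_nonneg (by exact_mod_cast h) hπ.le
      nlinarith
    have hcos' : Real.cos (τ * ω) = (-1) ^ n := by
      rw [← hn]
      simpa using Real.cos_add_int_mul_pi 0 n
    rcases Int.even_or_odd n with he | ho
    · have hc1 : Real.cos (τ * ω) = 1 := by rw [hcos', he.neg_one_zpow]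
      have hω2 : ω ^ 2 = 3 := by rw [hc1] at hcos; linarith
      have hωv : ω = Real.sqrt 3 := by
        rw [show (3:ℝ) = ω ^ 2 from hω2.symm, Real.sqrt_sq hω.le]
      obtain ⟨m, hm⟩ := he
      have hm0 : 0 < m := by omega
      left
      refine ⟨hωv, m.toNat, by omega, ?_⟩
      have hmn : (m.toNat : ℝ) = (m : ℝ) := by exact_mod_cast Int.toNat_of_nonneg hm0.le
      have hτω : τ * ω = 2 * (m : ℝ) * Real.pi := by
        rw [← hn, hm]; push_cast; ring
      rw [hωv] at hτω
      have hs3 : Real.sqrt 3 ≠ 0 := by positivity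
      field_simp
      rw [hmn]
      linarith [hτω]
    · have hc1 : Real.cos (τ * ω) = -1 := by rw [hcos', ho.neg_one_zpow]
      have hω2 : ω ^ 2 = 1 := by rw [hc1] at hcos; linarith
      have hωv : ω = 1 := by nlinarith
      obtain ⟨m, hm⟩ := ho
      have hm0 : 0 ≤ m := by omega
      right
      refine ⟨hωv, m.toNat, ?_⟩
      have hmn : (m.toNat : ℝ) = (m : ℝ) := by exact_mod_cast Int.toNat_of_nonneg hm0
      have hτω : τ * ω = (2 * (m : ℝ) + 1) * Real.pi := by
        rw [← hn, hm]; push_cast; ring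
      rw [hωv, mul_one] at hτω
      rw [hmn]; linarith
  · rintro (⟨hωv, k, hk, hτv⟩ | ⟨hωv, k, hτv⟩)
    · have hs3 : Real.sqrt 3 ≠ 0 := by positivity
      have hτω : τ * ω = 2 * (k : ℝ) * Real.pi := by
        rw [hωv, hτv]; field_simp
      rw [hτω, hωv, Real.sq_sqrt (by norm_num : (0:ℝ) ≤ 3)]
      constructor
      · rw [show 2 * (k : ℝ) * Real.pi = ((k : ℤ) : ℝ) * (2 * Real.pi) by push_cast; ring,
          Real.cos_int_mul_two_pi]
        norm_num
      · rw [show 2 * (k : ℝ) * Real.pi = ((2 * k : ℤ) : ℝ) * Real.pi by push_cast; ring,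
          Real.sin_int_mul_pi]
    · have hτω : τ * ω = (2 * (k : ℝ) + 1) * Real.pi := by
        rw [hωv, hτv]; ring
      rw [hτω, hωv]
      constructor
      · rw [show (2 * (k : ℝ) + 1) * Real.pi = ((k : ℤ) : ℝ) * (2 * Real.pi) + Real.pi by
          push_cast; ring, Real.cos_int_mul_two_pi_add_pi]
        norm_num
      · rw [show (2 * (k : ℝ) + 1) * Real.pi = ((2 * k + 1 : ℤ) : ℝ) * Real.pi by
          push_cast; ring, Real.sin_int_mul_pi]
end

section
/- Let τ and ω be real numbers with ω > 0. If (I·ω)³ − (I·ω)² + 2·(I·ω) − 1 + (I·ω)·Complex.exp(−τ·(I·ω)) = 0, then ω = 1 or ω = Real.sqrt (1 + Real.sqrt 2). That is, the only possible crossing frequencies of the characteristic function s³ − s² + 2s − 1 + s·e^{−τs} of the three-dimensional subsystem are ω = 1 and ω = √(1 + √2). -/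
theorem subsystem9_possible_crossing_frequencies
    (τ ω : ℝ) (hω : 0 < ω)
    (h : (Complex.I * ω) ^ 3 - (Complex.I * ω) ^ 2 + 2 * (Complex.I * ω) - 1
        + (Complex.I * ω) * Complex.exp (-(τ : ℂ) * (Complex.I * ω)) = 0) :
    ω = 1 ∨ ω = Real.sqrt (1 + Real.sqrt 2) := by
  have hθ : -(τ:ℂ) * (Complex.I * ω) = ((-(τ*ω) : ℝ) : ℂ) * Complex.I := by
    push_cast; ring
  rw [hθ, Complex.exp_mul_I, ← Complex.ofReal_cos, ← Complex.ofReal_sin,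
    Real.cos_neg, Real.sin_neg] at h
  set c := Real.cos (τ*ω) with hcd
  set s := Real.sin (τ*ω) with hsd
  rw [Complex.ext_iff] at h
  obtain ⟨h1, h2⟩ := h
  simp [Complex.add_re, Complex.add_im, Complex.sub_re, Complex.sub_im,
    Complex.mul_re, Complex.mul_im, pow_succ] at h1 h2
  have hc : s ^ 2 + c ^ 2 = 1 := Real.sin_sq_add_cos_sq (τ*ω)
  have key : (ω^2 - 1) * (ω^4 - 2*ω^2 - 1) = 0 := by linear_combination ((1 - ω^2) - ω*s + 2*(ω^2-1))*h1 - (ω*c + (ω^3 - 2*ω))*h2 + ω^2*hc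
  rcases mul_eq_zero.mp key with hk | hk
  · left; nlinarith
  · right
    have h2s : Real.sqrt 2 ^ 2 = 2 := Real.sq_sqrt (by norm_num)
    have h2n : (0:ℝ) ≤ Real.sqrt 2 := Real.sqrt_nonneg 2
    have h2g : (1:ℝ) < Real.sqrt 2 := by nlinarith
    have key2 : (ω^2 - (1 + Real.sqrt 2)) * (ω^2 - (1 - Real.sqrt 2)) = 0 := by
      linear_combination hk - h2s
    rcases mul_eq_zero.mp key2 with hk2 | hk2
    · have : ω^2 = 1 + Real.sqrt 2 := by linarith
      rw [← this, Real.sqrt_sq hω.le]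
    · nlinarith
end
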